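/- Let T > 0, 0 ≤ β < 1, 1 < q < ∞, and let g : [0,T] → [0,∞) be measurable with g ∈ L^q(0,T). Let h : [0,T] → [0,∞) be absolutely continuous with |h′(t)| ≤ g(t) · h(t)^β for almost every t ∈ [0,T]. If h(T*) = 0 for some T* ∈ [0,T], then lim_{t → T*} h(t) · |t − T*|^{−η} = 0, where η = ((q−1)/q) · 1/(1−β). -/

import Mathlib

open MeasureTheory Filter

lemma aux_rpow_tendsto {x : ℝ} (hx : 0 < x) {u : ℕ → ℝ} {l : ℝ}
    (hu : Tendsto u atTop (nhds l)) :
    Tendsto (fun n => x ^ u n) atTop (nhds (x ^ l)) := by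
  have hrw : ∀ y : ℝ, x ^ y = Real.exp (Real.log x * y) := fun y => Real.rpow_def_of_pos hx y
  simp only [hrw]
  exact (Real.continuous_exp.continuousAt.tendsto).comp (hu.const_mul _)

lemma aux_holder (q : ℝ) (hq : 1 < q) (Tstar t : ℝ) (g : ℝ → ℝ) (hgmeas : Measurable g)
    (hg0 : ∀ t, 0 ≤ g t) (T : ℝ)
    (hIccInt : IntegrableOn (fun t => g t ^ q) (Set.Icc 0 T))
    (hsub : Set.uIoc Tstar t ⊆ Set.Icc 0 T) :
    ∫ s in Set.uIoc Tstar t, g s ≤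
      (∫ s in Set.uIoc Tstar t, g s ^ q) ^ q⁻¹ * |t - Tstar| ^ (1 - q⁻¹) := by
  have hq0 : (0:ℝ) < q := lt_trans one_pos hq
  set μ := volume.restrict (Set.uIoc Tstar t) with hμ
  have hμuniv : (μ Set.univ).toReal = |t - Tstar| := by
    rw [hμ, Measure.restrict_apply_univ, Set.uIoc, Real.volume_Ioc, max_sub_min_eq_abs,
      abs_sub_comm, ENNReal.toReal_ofReal (abs_nonneg _)]
  haveI : IsFiniteMeasure μ := by
    constructor
    rw [hμ, Measure.restrict_apply_univ, Set.uIoc, Real.volume_Ioc]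
    exact ENNReal.ofReal_lt_top
  have hpq : (q / (q - 1)).HolderConjugate q := (Real.HolderConjugate.conjExponent hq).symm
  have hgq : Integrable (fun s => g s ^ q) μ := hIccInt.mono_set hsub
  have hmem : MemLp g (ENNReal.ofReal q) μ := by
    rw [← memLp_norm_rpow_iff (hgmeas.aestronglyMeasurable.restrict)
      (ENNReal.ofReal_pos.mpr hq0).ne' ENNReal.ofReal_ne_top,
      ENNReal.div_self (ENNReal.ofReal_pos.mpr hq0).ne' ENNReal.ofReal_ne_top,
      ENNReal.toReal_ofReal hq0.le, memLp_one_iff_integrable]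
    refine hgq.congr ?_
    exact Filter.Eventually.of_forall fun s => by
      simp [Real.norm_of_nonneg (hg0 s)]
  have hmem1 : MemLp (fun _ : ℝ => (1:ℝ)) (ENNReal.ofReal (q / (q - 1))) μ := memLp_const 1
  have H := integral_mul_le_Lp_mul_Lq_of_nonneg hpq
    (Filter.Eventually.of_forall fun _ => zero_le_one)
    (Filter.Eventually.of_forall fun s => hg0 s) hmem1 hmem
  have hexp : 1 / (q / (q - 1)) = 1 - q⁻¹ := by field_simp
  simp only [one_mul, Real.one_rpow] at H
  rw [integral_const, smul_eq_mul, mul_one, measureReal_def, hμuniv, hexp, one_div] at H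
  calc ∫ s in Set.uIoc Tstar t, g s ≤ _ := H
    _ = _ := by rw [mul_comm]

/-- Starovoitov collision rate: Let `T > 0`, `0 ≤ β < 1`, `1 < q < ∞`,
`g : [0,T] → [0,∞)` measurable with `g ∈ L^q(0,T)`, and let `h : [0,T] → [0,∞)` be
absolutely continuous (encoded by an integrable a.e. derivative `h'` with
`h t = h 0 + ∫₀ᵗ h'`) satisfying `|h′(t)| ≤ g(t)·h(t)^β` a.e. If `h(T*) = 0` for some
`T* ∈ [0,T]`, then `h(t)·|t − T*|^{−η} → 0` as `t → T*` in `[0,T] \ {T*}`, where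
`η = ((q−1)/q)·1/(1−β)`. -/
theorem stmt_3 (T β q : ℝ) (hT : 0 < T) (hβ0 : 0 ≤ β) (hβ1 : β < 1) (hq : 1 < q)
    (g : ℝ → ℝ) (hgmeas : Measurable g) (hg0 : ∀ t, 0 ≤ g t)
    (hgLq : IntegrableOn (fun t => g t ^ q) (Set.Ioo 0 T))
    (h h' : ℝ → ℝ) (hh0 : ∀ t ∈ Set.Icc (0:ℝ) T, 0 ≤ h t)
    (hh'int : IntegrableOn h' (Set.Icc 0 T))
    (hac : ∀ t ∈ Set.Icc (0:ℝ) T, h t = h 0 + ∫ s in (0:ℝ)..t, h' s)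
    (hode : ∀ᵐ t : ℝ, t ∈ Set.Icc (0:ℝ) T → |h' t| ≤ g t * h t ^ β)
    (Tstar : ℝ) (hTstar : Tstar ∈ Set.Icc (0:ℝ) T) (hzero : h Tstar = 0) :
    Filter.Tendsto (fun t => h t * |t - Tstar| ^ (-((q - 1) / q * (1 / (1 - β)))))
      (nhdsWithin Tstar (Set.Icc 0 T \ {Tstar})) (nhds 0) := by
  have hq0 : (0:ℝ) < q := lt_trans one_pos hq
  have hβ' : (0:ℝ) < 1 - β := by linarith
  have hqi : (0:ℝ) < 1 - q⁻¹ := by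
    rw [sub_pos]
    exact inv_lt_one_of_one_lt₀ hq
  set η : ℝ := (q - 1) / q * (1 / (1 - β)) with hη
  have hηpos : 0 < η := mul_pos (div_pos (by linarith) hq0) (div_pos one_pos hβ')
  -- integrability facts
  have hIccInt : IntegrableOn (fun t => g t ^ q) (Set.Icc 0 T) := by
    rw [integrableOn_Icc_iff_integrableOn_Ioo]; exact hgLq
  have hgInt : IntegrableOn g (Set.Icc 0 T) := by
    haveI : IsFiniteMeasure (volume.restrict (Set.Icc (0:ℝ) T)) := by
      constructor
      rw [Measure.restrict_apply_univ, Real.volume_Icc]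
      exact ENNReal.ofReal_lt_top
    refine Integrable.mono' ((integrable_const 1).add hIccInt) hgmeas.aestronglyMeasurable.restrict ?_
    refine Filter.Eventually.of_forall fun s => ?_
    rw [Real.norm_of_nonneg (hg0 s)]
    rcases le_total (g s) 1 with hle | hle
    · have := Real.rpow_nonneg (hg0 s) q
      simp only [Pi.add_apply]
      linarith
    · have h2 : g s ^ (1:ℝ) ≤ g s ^ q := Real.rpow_le_rpow_of_exponent_le hle hq.le
      rw [Real.rpow_one] at h2
      simp only [Pi.add_apply]
      linarith
  -- interval integrability of h'
  have hmemIcc : ∀ x ∈ Set.Icc (0:ℝ) T, x ∈ Set.uIcc (0:ℝ) T := by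
    intro x hx; rwa [Set.uIcc_of_le hT.le]
  have hII : ∀ a ∈ Set.Icc (0:ℝ) T, ∀ b ∈ Set.Icc (0:ℝ) T, IntervalIntegrable h' volume a b := by
    intro a ha b hb
    exact (hh'int.mono_set ((Set.uIcc_subset_uIcc (hmemIcc a ha) (hmemIcc b hb)).trans
      (by rw [Set.uIcc_of_le hT.le]))).intervalIntegrable
  -- continuity and boundedness of h
  have hcont : ContinuousOn h (Set.Icc 0 T) := by
    have hC : ContinuousOn (fun x => h 0 + ∫ s in (0:ℝ)..x, h' s) (Set.Icc 0 T) := by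
      refine ContinuousOn.add continuousOn_const ?_
      intro x hx
      apply intervalIntegral.continuousWithinAt_primitive (Real.volume_singleton)
      rw [min_self, max_eq_right hT.le]
      exact hII 0 (Set.left_mem_Icc.mpr hT.le) T (Set.right_mem_Icc.mpr hT.le)
    exact ContinuousOn.congr hC fun x hx => hac x hx
  obtain ⟨C₀, hC₀⟩ := isCompact_Icc.exists_bound_of_continuousOn hcont
  set C : ℝ := max C₀ 1 with hCdef
  have hCpos : (0:ℝ) < C := lt_of_lt_of_le one_pos (le_max_right _ _)
  have hhC : ∀ t ∈ Set.Icc (0:ℝ) T, h t ≤ C := fun t ht =>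
    (le_abs_self _).trans ((hC₀ t ht).trans (le_max_left _ _))
  -- representation of h from Tstar
  have hrep : ∀ t ∈ Set.Icc (0:ℝ) T, h t = ∫ s in Tstar..t, h' s := by
    intro t ht
    have := intervalIntegral.integral_interval_sub_left (hII 0 (Set.left_mem_Icc.mpr hT.le) t ht)
      (hII 0 (Set.left_mem_Icc.mpr hT.le) Tstar hTstar)
    have h1 := hac t ht
    have h2 := hac Tstar hTstar
    rw [hzero] at h2
    linarith [this]
  -- the local mass of g^q
  set J : ℝ → ℝ := fun t => ∫ s in Set.uIoc Tstar t, g s ^ q with hJdef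
  have hJ0 : ∀ t, 0 ≤ J t := fun t => setIntegral_nonneg measurableSet_uIoc
    (fun s _ => Real.rpow_nonneg (hg0 s) q)
  -- subsets
  have huIcc : ∀ t ∈ Set.Icc (0:ℝ) T, Set.uIoc Tstar t ⊆ Set.Icc 0 T := by
    intro t ht
    exact Set.uIoc_subset_uIcc.trans ((Set.uIcc_subset_uIcc (hmemIcc Tstar hTstar)
      (hmemIcc t ht)).trans (by rw [Set.uIcc_of_le hT.le]))
  have hsub2 : ∀ t : ℝ, ∀ s ∈ Set.uIoc Tstar t, Set.uIoc Tstar s ⊆ Set.uIoc Tstar t := by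
    intro t s hs
    rcases le_total Tstar t with hc | hc
    · rw [Set.uIoc_of_le hc] at hs ⊢
      rw [Set.uIoc_of_le hs.1.le]
      exact Set.Ioc_subset_Ioc le_rfl hs.2
    · rw [Set.uIoc_of_ge hc] at hs ⊢
      rw [Set.uIoc_of_ge hs.2]
      exact Set.Ioc_subset_Ioc hs.1.le le_rfl
  have habs2 : ∀ t : ℝ, ∀ s ∈ Set.uIoc Tstar t, |s - Tstar| ≤ |t - Tstar| := by
    intro t s hs
    rcases le_total Tstar t with hc | hc
    · rw [Set.uIoc_of_le hc] at hs
      rw [abs_of_nonneg (by linarith [hs.1.le]), abs_of_nonneg (by linarith)]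
      linarith [hs.2]
    · rw [Set.uIoc_of_ge hc] at hs
      rw [abs_of_nonpos (by linarith [hs.2]), abs_of_nonpos (by linarith)]
      linarith [hs.1]
  have hJmono : ∀ t ∈ Set.Icc (0:ℝ) T, ∀ s ∈ Set.uIoc Tstar t, J s ≤ J t := by
    intro t ht s hs
    refine setIntegral_mono_set (hIccInt.mono_set (huIcc t ht))
      (Filter.Eventually.of_forall fun s => Real.rpow_nonneg (hg0 s) q)
      (HasSubset.Subset.eventuallyLE (hsub2 t s hs))
  -- main induction
  have key : ∀ n : ℕ, ∀ t ∈ Set.Icc (0:ℝ) T,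
      h t ≤ C ^ (β ^ n) * (J t ^ q⁻¹) ^ ((1 - β ^ n) / (1 - β))
        * |t - Tstar| ^ ((1 - q⁻¹) * ((1 - β ^ n) / (1 - β))) := by
    intro n
    induction n with
    | zero =>
      intro t ht
      simp only [pow_zero, sub_self, zero_div, Real.rpow_zero, Real.rpow_one, mul_zero,
        mul_one]
      exact hhC t ht
    | succ n ih =>
      intro t ht
      have hen : 0 ≤ (1 - β ^ n) / (1 - β) :=
        div_nonneg (by nlinarith [pow_le_one₀ hβ0 hβ1.le (n := n)]) hβ'.le
      set e : ℝ := (1 - β ^ n) / (1 - β) with hedef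
      have heS : (1 - β ^ (n+1)) / (1 - β) = β * e + 1 := by
        have hp : β ^ (n+1) = β * β ^ n := by rw [pow_succ]; ring
        rw [hedef, hp]
        field_simp
        ring
      set Dt : ℝ := |t - Tstar| with hDt
      have hD0 : (0:ℝ) ≤ Dt := abs_nonneg _
      have hJ' : (0:ℝ) ≤ J t ^ q⁻¹ := Real.rpow_nonneg (hJ0 t) _
      set K : ℝ := C ^ (β ^ n) * (J t ^ q⁻¹) ^ e * Dt ^ ((1 - q⁻¹) * e) with hK
      have hK0 : 0 ≤ K := mul_nonneg (mul_nonneg (Real.rpow_nonneg hCpos.le _)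
        (Real.rpow_nonneg hJ' _)) (Real.rpow_nonneg hD0 _)
      have hmono : ∀ s ∈ Set.uIoc Tstar t, h s ≤ K := by
        intro s hs
        have hsIcc : s ∈ Set.Icc (0:ℝ) T := huIcc t ht hs
        refine (ih s hsIcc).trans ?_
        rw [hK]
        have h1 : (J s ^ q⁻¹) ^ e ≤ (J t ^ q⁻¹) ^ e :=
          Real.rpow_le_rpow (Real.rpow_nonneg (hJ0 s) _)
            (Real.rpow_le_rpow (hJ0 s) (hJmono t ht s hs) (inv_nonneg.mpr hq0.le)) hen
        have h2 : |s - Tstar| ^ ((1 - q⁻¹) * e) ≤ Dt ^ ((1 - q⁻¹) * e) :=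
          Real.rpow_le_rpow (abs_nonneg _) (habs2 t s hs) (by positivity)
        have hcn : (0:ℝ) ≤ C ^ (β ^ n) := Real.rpow_nonneg hCpos.le _
        calc C ^ (β ^ n) * (J s ^ q⁻¹) ^ e * |s - Tstar| ^ ((1 - q⁻¹) * e)
            ≤ C ^ (β ^ n) * (J t ^ q⁻¹) ^ e * |s - Tstar| ^ ((1 - q⁻¹) * e) := by
              apply mul_le_mul_of_nonneg_right (mul_le_mul_of_nonneg_left h1 hcn)
              positivity
          _ ≤ C ^ (β ^ n) * (J t ^ q⁻¹) ^ e * Dt ^ ((1 - q⁻¹) * e) := by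
              apply mul_le_mul_of_nonneg_left h2 (mul_nonneg hcn (Real.rpow_nonneg hJ' _))
      have hae : ∀ᵐ s ∂(volume.restrict (Set.uIoc Tstar t)), |h' s| ≤ g s * K ^ β := by
        have h1 := ae_restrict_of_ae (s := Set.uIoc Tstar t) hode
        have h2 := ae_restrict_mem (μ := volume) (s := Set.uIoc Tstar t) measurableSet_uIoc
        filter_upwards [h1, h2] with s h1s h2s
        have hsIcc : s ∈ Set.Icc (0:ℝ) T := huIcc t ht h2s
        refine (h1s hsIcc).trans ?_
        exact mul_le_mul_of_nonneg_left
          (Real.rpow_le_rpow (hh0 s hsIcc) (hmono s h2s) hβ0) (hg0 s)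
      have step1 : h t ≤ ∫ s in Set.uIoc Tstar t, |h' s| := by
        have := intervalIntegral.norm_integral_le_integral_norm_uIoc
          (f := h') (a := Tstar) (b := t) (μ := volume)
        rw [hrep t ht]
        refine (le_abs_self _).trans ?_
        rw [← Real.norm_eq_abs]
        refine this.trans ?_
        simp only [Real.norm_eq_abs]
        exact le_rfl
      have step2 : ∫ s in Set.uIoc Tstar t, |h' s| ≤ ∫ s in Set.uIoc Tstar t, g s * K ^ β := by
        refine integral_mono_ae ((hh'int.mono_set (huIcc t ht)).abs)
          ((hgInt.mono_set (huIcc t ht)).mul_const _) hae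
      have step3 : ∫ s in Set.uIoc Tstar t, g s * K ^ β
          = (∫ s in Set.uIoc Tstar t, g s) * K ^ β := integral_mul_const _ _
      have step4 : (∫ s in Set.uIoc Tstar t, g s) * K ^ β
          ≤ (J t ^ q⁻¹ * Dt ^ (1 - q⁻¹)) * K ^ β :=
        mul_le_mul_of_nonneg_right
          (aux_holder q hq Tstar t g hgmeas hg0 T hIccInt (huIcc t ht))
          (Real.rpow_nonneg hK0 β)
      have halg : (J t ^ q⁻¹ * Dt ^ (1 - q⁻¹)) * K ^ β
          = C ^ (β ^ (n+1)) * (J t ^ q⁻¹) ^ ((1 - β ^ (n+1)) / (1 - β))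
            * Dt ^ ((1 - q⁻¹) * ((1 - β ^ (n+1)) / (1 - β))) := by
        have hKβ : K ^ β = C ^ (β ^ n * β) * (J t ^ q⁻¹) ^ (e * β) * Dt ^ ((1 - q⁻¹) * e * β) := by
          rw [hK, Real.mul_rpow (mul_nonneg (Real.rpow_nonneg hCpos.le _)
            (Real.rpow_nonneg hJ' _)) (Real.rpow_nonneg hD0 _),
            Real.mul_rpow (Real.rpow_nonneg hCpos.le _) (Real.rpow_nonneg hJ' _),
            ← Real.rpow_mul hCpos.le, ← Real.rpow_mul hJ', ← Real.rpow_mul hD0]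
        rw [hKβ, heS, pow_succ]
        have hb1 : 0 ≤ e * β := mul_nonneg hen hβ0
        have hb2 : 0 ≤ (1 - q⁻¹) * e * β := mul_nonneg (mul_nonneg hqi.le hen) hβ0
        have he1 : e * β + 1 ≠ 0 := by nlinarith
        have he2 : (1 - q⁻¹) * e * β + (1 - q⁻¹) ≠ 0 := by nlinarith
        rw [show β * e + 1 = e * β + 1 by ring, Real.rpow_add' hJ' he1,
          show (1 - q⁻¹) * (e * β + 1) = (1 - q⁻¹) * e * β + (1 - q⁻¹) by ring,
          Real.rpow_add' hD0 he2, Real.rpow_one]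
        ring
      calc h t ≤ ∫ s in Set.uIoc Tstar t, |h' s| := step1
        _ ≤ ∫ s in Set.uIoc Tstar t, g s * K ^ β := step2
        _ = (∫ s in Set.uIoc Tstar t, g s) * K ^ β := step3
        _ ≤ (J t ^ q⁻¹ * Dt ^ (1 - q⁻¹)) * K ^ β := step4
        _ = _ := halg
  -- pass to the limit n → ∞
  have hbound : ∀ t ∈ Set.Icc (0:ℝ) T, t ≠ Tstar →
      h t * |t - Tstar| ^ (-η) ≤ J t ^ (q⁻¹ * (1 / (1 - β))) := by
    intro t ht htne
    have hD : 0 < |t - Tstar| := abs_pos.mpr (sub_ne_zero.mpr htne)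
    by_cases hJt : J t = 0
    · have h1 := key 1 t ht
      rw [hJt, Real.zero_rpow (inv_ne_zero hq0.ne'),
        Real.zero_rpow (by rw [pow_one]; exact (div_ne_zero (by linarith) hβ'.ne')) ] at h1
      have hht : h t = 0 := le_antisymm (by simpa using h1) (hh0 t ht)
      rw [hht, hJt, zero_mul, Real.zero_rpow]
      positivity
    · have hJpos : 0 < J t := lt_of_le_of_ne (hJ0 t) (Ne.symm hJt)
      have hJ'pos : 0 < J t ^ q⁻¹ := Real.rpow_pos_of_pos hJpos _
      have hβn : Tendsto (fun n : ℕ => β ^ n) atTop (nhds 0) :=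
        tendsto_pow_atTop_nhds_zero_of_lt_one hβ0 hβ1
      have hseq : ∀ n : ℕ, h t * |t - Tstar| ^ (-η)
          ≤ C ^ (β ^ n) * (J t ^ q⁻¹) ^ ((1 - β ^ n) / (1 - β))
            * |t - Tstar| ^ (-(η * β ^ n)) := by
        intro n
        have h1 := mul_le_mul_of_nonneg_right (key n t ht)
          (Real.rpow_nonneg hD.le (-η))
        refine h1.trans_eq ?_
        have hexp : (1 - q⁻¹) * ((1 - β ^ n) / (1 - β)) + -η = -(η * β ^ n) := by
          rw [hη]
          field_simp
          ring
        rw [mul_assoc, ← Real.rpow_add hD, hexp]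
      have hlim : Tendsto (fun n : ℕ => C ^ (β ^ n) * (J t ^ q⁻¹) ^ ((1 - β ^ n) / (1 - β))
          * |t - Tstar| ^ (-(η * β ^ n))) atTop
          (nhds (J t ^ (q⁻¹ * (1 / (1 - β))))) := by
        have l1 : Tendsto (fun n : ℕ => C ^ (β ^ n)) atTop (nhds 1) := by
          have := aux_rpow_tendsto hCpos hβn
          rwa [Real.rpow_zero] at this
        have l2 : Tendsto (fun n : ℕ => (J t ^ q⁻¹) ^ ((1 - β ^ n) / (1 - β))) atTop
            (nhds ((J t ^ q⁻¹) ^ (1 / (1 - β)))) := by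
          refine aux_rpow_tendsto hJ'pos ?_
          have : Tendsto (fun n : ℕ => (1 - β ^ n) / (1 - β)) atTop (nhds ((1 - 0) / (1 - β))) :=
            (tendsto_const_nhds.sub hβn).div_const _
          simpa using this
        have l3 : Tendsto (fun n : ℕ => |t - Tstar| ^ (-(η * β ^ n))) atTop (nhds 1) := by
          have hexp : Tendsto (fun n : ℕ => -(η * β ^ n)) atTop (nhds 0) := by
            have := (hβn.const_mul η).neg
            simpa using this
          have := aux_rpow_tendsto hD hexp
          rwa [Real.rpow_zero] at this
        have := (l1.mul l2).mul l3
        rw [one_mul, mul_one, ← Real.rpow_mul (hJ0 t)] at this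
        exact this
      exact ge_of_tendsto' hlim hseq
  -- tendsto of J to 0
  have hFint : IntervalIntegrable (fun s => g s ^ q) volume (min Tstar 0) (max Tstar T) := by
    rw [min_eq_right hTstar.1, max_eq_right hTstar.2]
    exact (hIccInt.mono_set (by rw [Set.uIcc_of_le hT.le])).intervalIntegrable
  have hF : ContinuousWithinAt (fun b => ∫ s in Tstar..b, g s ^ q) (Set.Icc 0 T) Tstar :=
    intervalIntegral.continuousWithinAt_primitive (Real.volume_singleton) hFint
  have hJabs : ∀ t : ℝ, J t = |∫ s in Tstar..t, g s ^ q| := by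
    intro t
    rcases le_total Tstar t with hc | hc
    · rw [intervalIntegral.integral_of_le hc, hJdef]
      simp only [Set.uIoc_of_le hc]
      rw [abs_of_nonneg (setIntegral_nonneg measurableSet_Ioc
        (fun s _ => Real.rpow_nonneg (hg0 s) q))]
    · rw [intervalIntegral.integral_of_ge hc, hJdef, abs_neg]
      simp only [Set.uIoc_of_ge hc]
      rw [abs_of_nonneg (setIntegral_nonneg measurableSet_Ioc
        (fun s _ => Real.rpow_nonneg (hg0 s) q))]
  have hJtend : Tendsto J (nhdsWithin Tstar (Set.Icc 0 T)) (nhds 0) := by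
    have h1 : Tendsto (fun b => ∫ s in Tstar..b, g s ^ q) (nhdsWithin Tstar (Set.Icc 0 T))
        (nhds 0) := by
      have := hF.tendsto
      rwa [intervalIntegral.integral_same] at this
    have h2 : Tendsto (fun b => |∫ s in Tstar..b, g s ^ q|) (nhdsWithin Tstar (Set.Icc 0 T))
        (nhds 0) := by
      have := (continuous_abs.continuousAt (x := (0:ℝ))).tendsto.comp h1
      rwa [abs_zero] at this
    exact h2.congr fun t => (hJabs t).symm
  have hItend : Tendsto (fun t => J t ^ (q⁻¹ * (1 / (1 - β))))
      (nhdsWithin Tstar (Set.Icc 0 T \ {Tstar})) (nhds 0) := by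
    have hr : (0:ℝ) < q⁻¹ * (1 / (1 - β)) := by positivity
    have hca : ContinuousAt (fun x : ℝ => x ^ (q⁻¹ * (1 / (1 - β)))) 0 :=
      Real.continuousAt_rpow_const 0 _ (Or.inr hr.le)
    have := hca.tendsto.comp (hJtend.mono_left
      (nhdsWithin_mono Tstar (s := Set.Icc 0 T \ {Tstar}) Set.diff_subset))
    rwa [Real.zero_rpow hr.ne'] at this
  refine tendsto_of_tendsto_of_tendsto_of_le_of_le' tendsto_const_nhds hItend ?_ ?_
  · filter_upwards [self_mem_nhdsWithin] with t htS
    exact mul_nonneg (hh0 t htS.1) (Real.rpow_nonneg (abs_nonneg _) _)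
  · filter_upwards [self_mem_nhdsWithin] with t htS
    exact hbound t htS.1 (by simpa using htS.2)
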